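/- Let w be a decreasing positive sequence with w(1)=1, w(k)→0, ∑w(k)=∞, let 0 < p < n, and Ψ(N) = (∑_{k=1}^N w(k))^{n/p}. If α is a bounded complex sequence and C > 0 satisfies |∑ₖ α(k)x₁(k)⋯xₙ(k)| ≤ C·‖x₁‖_{d(w,p)}⋯‖xₙ‖_{d(w,p)} for all finitely supported x₁,…,xₙ, then for every N, ∑_{k=1}^N α*(k) ≤ C·Ψ(N), where α* is the decreasing rearrangement of |α|. -/

import Mathlib

/-- The decreasing rearrangement of (the moduli of) a bounded sequence:
`x*(k) = inf { sup_{j ∉ J} |x(j)| : J ⊆ ℕ, |J| ≤ k }` (0-indexed, so `dRear x 0 = sup |x|`). -/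
noncomputable def dRear (x : ℕ → ℂ) (k : ℕ) : ℝ :=
  sInf {s : ℝ | ∃ J : Finset ℕ, J.card ≤ k ∧ ∀ j ∉ J, ‖x j‖ ≤ s}

lemma dRear_bddBelow (x : ℕ → ℂ) (k : ℕ) :
    BddBelow {s : ℝ | ∃ J : Finset ℕ, J.card ≤ k ∧ ∀ j ∉ J, ‖x j‖ ≤ s} := by
  refine ⟨0, fun s hs => ?_⟩
  obtain ⟨J, _, hJ⟩ := hs
  obtain ⟨j, hj⟩ := J.exists_notMem
  exact le_trans (norm_nonneg _) (hJ j hj)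

lemma greedy (α : ℕ → ℂ) (ε : ℝ) (hε : 0 < ε) :
    ∀ N, ∃ J : Finset ℕ, J.card = N ∧
      ∑ k ∈ Finset.range N, dRear α k ≤ ∑ j ∈ J, ‖α j‖ + N * ε := by
  intro N
  induction N with
  | zero => exact ⟨∅, rfl, by simp⟩
  | succ N ih =>
    obtain ⟨J, hJc, hJ⟩ := ih
    have hex : ∃ j ∉ J, dRear α N ≤ ‖α j‖ + ε := by
      by_contra hcon
      push_neg at hcon
      have hmem : dRear α N - ε ∈
          {s : ℝ | ∃ J' : Finset ℕ, J'.card ≤ N ∧ ∀ j ∉ J', ‖α j‖ ≤ s} := by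
        exact ⟨J, hJc.le, fun j hj => by linarith [hcon j hj]⟩
      have := csInf_le (dRear_bddBelow α N) hmem
      have : dRear α N ≤ dRear α N - ε := this
      linarith
    obtain ⟨j, hjJ, hjle⟩ := hex
    refine ⟨insert j J, ?_, ?_⟩
    · rw [Finset.card_insert_of_notMem hjJ, hJc]
    · rw [Finset.sum_range_succ, Finset.sum_insert hjJ]
      push_cast
      linarith

lemma dRear_unit (J : Finset ℕ) (x : ℕ → ℂ) (h1 : ∀ j ∈ J, ‖x j‖ = 1)
    (h0 : ∀ j ∉ J, x j = 0) (k : ℕ) :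
    dRear x k = if k < J.card then 1 else 0 := by
  split_ifs with hk
  · refine le_antisymm ?_ ?_
    · refine csInf_le (dRear_bddBelow x k) ⟨∅, by simp, fun j _ => ?_⟩
      by_cases hj : j ∈ J
      · exact (h1 j hj).le
      · simp [h0 j hj]
    · refine le_csInf ⟨1, ∅, by simp, fun j _ => ?_⟩ ?_
      · by_cases hj : j ∈ J
        · exact (h1 j hj).le
        · simp [h0 j hj]
      · rintro s ⟨J', hJ'c, hJ'⟩
        have hns : ¬ J ⊆ J' := fun hsub => by
          have := Finset.card_le_card hsub
          omega
        obtain ⟨j, hjJ, hjJ'⟩ := Finset.not_subset.mp hns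
        have := hJ' j hjJ'
        rw [h1 j hjJ] at this
        exact this
  · refine le_antisymm ?_ ?_
    · refine csInf_le (dRear_bddBelow x k) ⟨J, by omega, fun j hj => ?_⟩
      simp [h0 j hj]
    · refine le_csInf ⟨0, J, by omega, fun j hj => by simp [h0 j hj]⟩ ?_
      rintro s ⟨J', _, hJ'⟩
      obtain ⟨j, hj⟩ := (J ∪ J').exists_notMem
      have := hJ' j (fun h => hj (Finset.mem_union_right _ h))
      rw [h0 j (fun h => hj (Finset.mem_union_left _ h))] at this
      simpa using this

lemma exists_unit_pow (z : ℂ) (n : ℕ) (hn : n ≠ 0) :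
    ∃ u : ℂ, ‖u‖ = 1 ∧ z * u ^ n = (‖z‖ : ℂ) := by
  by_cases hz : z = 0
  · exact ⟨1, by simp, by simp [hz]⟩
  · refine ⟨Complex.exp ((↑(-z.arg / n) : ℂ) * Complex.I), ?_, ?_⟩
    · rw [Complex.norm_exp_ofReal_mul_I]
    · rw [← Complex.exp_nat_mul]
      have h1 : (n : ℂ) * ((↑(-z.arg / n) : ℂ) * Complex.I) = (↑(-z.arg) : ℂ) * Complex.I := by
        push_cast
        have hn' : (n : ℂ) ≠ 0 := Nat.cast_ne_zero.mpr hn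
        field_simp
      rw [h1, Complex.ofReal_neg, neg_mul, Complex.exp_neg,
        mul_comm z, inv_mul_eq_iff_eq_mul₀ (Complex.exp_ne_zero _),
        mul_comm, Complex.norm_mul_exp_arg_mul_I z]

/-- Necessity in Theorem 1(b): if the diagonal `n`-linear form with coefficients `α` is
bounded by `C` on finitely supported sequences with respect to the Lorentz norm
`‖x‖_{d(w,p)} = (∑ x*(k)^p w(k))^{1/p}`, then `∑_{k<N} α*(k) ≤ C (∑_{k<N} w(k))^{n/p} = C Ψ(N)`
for every `N`. -/
theorem stmt8 (w : ℕ → ℝ) (hw : ∀ k, 0 < w k) (hwa : Antitone w) (hw1 : w 0 = 1)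
    (hw0 : Filter.Tendsto w Filter.atTop (nhds 0)) (hwns : ¬ Summable w)
    (p : ℝ) (n : ℕ) (hp : 0 < p) (hpn : p < n)
    (α : ℕ → ℂ) (hα : ∃ A : ℝ, ∀ k, ‖α k‖ ≤ A) (C : ℝ) (hC : 0 < C)
    (hT : ∀ x : Fin n → ℕ → ℂ, (∀ i, (Function.support (x i)).Finite) →
      ‖∑' k, α k * ∏ i, x i k‖ ≤
        C * ∏ i, (∑' k, dRear (x i) k ^ p * w k) ^ (1 / p)) :
    ∀ N : ℕ, ∑ k ∈ Finset.range N, dRear α k ≤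
      C * (∑ k ∈ Finset.range N, w k) ^ ((n : ℝ) / p) := by
  have hn : 0 < n := by
    by_contra h
    push_neg at h
    interval_cases n
    · simp at hpn; linarith
  intro N
  rcases Nat.eq_zero_or_pos N with h0 | hNpos
  · subst h0
    simp only [Finset.range_zero, Finset.sum_empty]
    positivity
  apply le_of_forall_pos_le_add
  intro ε hε
  have hNne : (N : ℝ) ≠ 0 := Nat.cast_ne_zero.mpr hNpos.ne'
  obtain ⟨J, hJc, hJ⟩ := greedy α (ε / N) (by positivity) N
  -- choose unimodular scalars
  choose u hu1 hun using fun k => exists_unit_pow (α k) n hn.ne'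
  set x : Fin n → ℕ → ℂ := fun _ k => if k ∈ J then u k else 0 with hx
  have hsupp : ∀ i, (Function.support (x i)).Finite := by
    intro i
    apply Set.Finite.subset J.finite_toSet
    intro k hk
    simp only [Function.mem_support, hx] at hk
    by_contra h
    exact hk (if_neg fun hkJ => h (Finset.mem_coe.mpr hkJ))
  have key := hT x hsupp
  -- compute the left side of key
  have hls : ∑' k, α k * ∏ i, x i k = ((∑ j ∈ J, ‖α j‖ : ℝ) : ℂ) := by
    rw [tsum_eq_sum (s := J) (fun k hk => ?_)]
    · rw [Complex.ofReal_sum]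
      refine Finset.sum_congr rfl fun k hk => ?_
      have : ∏ i : Fin n, x i k = u k ^ n := by
        simp only [hx, if_pos hk]
        rw [Finset.prod_const, Finset.card_univ, Fintype.card_fin]
      rw [this, hun k]
    · have : ∏ i : Fin n, x i k = 0 := by
        apply Finset.prod_eq_zero (Finset.mem_univ (⟨0, hn⟩ : Fin n))
        simp [hx, hk]
      rw [this, mul_zero]
  have hlsn : ‖∑' k, α k * ∏ i, x i k‖ = ∑ j ∈ J, ‖α j‖ := by
    rw [hls, Complex.norm_real, Real.norm_of_nonneg (Finset.sum_nonneg fun j _ => norm_nonneg _)]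
  -- compute the right side of key
  have hdr : ∀ i k, dRear (x i) k = if k < N then 1 else 0 := by
    intro i k
    rw [← hJc]
    exact dRear_unit J (x i) (fun j hj => by simp [hx, hj, hu1]) (fun j hj => by simp [hx, hj]) k
  have hts : ∀ i : Fin n, ∑' k, dRear (x i) k ^ p * w k = ∑ k ∈ Finset.range N, w k := by
    intro i
    rw [tsum_eq_sum (s := Finset.range N) (fun k hk => ?_)]
    · refine Finset.sum_congr rfl fun k hk => ?_
      rw [hdr i k, if_pos (Finset.mem_range.mp hk), Real.one_rpow, one_mul]
    · rw [hdr i k, if_neg (by simpa using fun h => hk (Finset.mem_range.mpr h)),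
        Real.zero_rpow hp.ne', zero_mul]
  have hS : (0 : ℝ) ≤ ∑ k ∈ Finset.range N, w k :=
    Finset.sum_nonneg fun k _ => (hw k).le
  have hrs : ∏ i : Fin n, (∑' k, dRear (x i) k ^ p * w k) ^ (1 / p)
      = (∑ k ∈ Finset.range N, w k) ^ ((n : ℝ) / p) := by
    calc ∏ i : Fin n, (∑' k, dRear (x i) k ^ p * w k) ^ (1 / p)
        = ∏ _i : Fin n, (∑ k ∈ Finset.range N, w k) ^ (1 / p) :=
          Finset.prod_congr rfl fun i _ => by rw [hts i]
      _ = ((∑ k ∈ Finset.range N, w k) ^ (1 / p)) ^ (n : ℕ) := by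
          rw [Finset.prod_const, Finset.card_univ, Fintype.card_fin]
      _ = (∑ k ∈ Finset.range N, w k) ^ ((n : ℝ) / p) := by
          rw [← Real.rpow_natCast ((∑ k ∈ Finset.range N, w k) ^ (1 / p)) n,
            ← Real.rpow_mul hS]
          congr 1
          field_simp
  rw [hlsn, hrs] at key
  have hNε : (N : ℝ) * (ε / N) = ε := by field_simp
  calc ∑ k ∈ Finset.range N, dRear α k ≤ ∑ j ∈ J, ‖α j‖ + N * (ε / N) := hJ
    _ = ∑ j ∈ J, ‖α j‖ + ε := by rw [hNε]
    _ ≤ C * (∑ k ∈ Finset.range N, w k) ^ ((n : ℝ) / p) + ε := by linarith
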